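/- Let F be a fixed connected graph on f ≥ 2 vertices, and let k ≥ f be a natural number with k ≡ 0 or 1 (mod f). Write k = l·f + a with a ∈ {0,1} and l = ⌊k/f⌋. Then Σ_G (−1)^{#E(G)} = (−1)^{l+1} (−1)^{l·#E(F)} · (k!/((f!)^l · l!)) · (f!/#Aut(F))^l, where the sum ranges over all graphs G on the labeled vertex set {1,…,k} containing at least one connected component isomorphic to F. -/

import Mathlib

open scoped Classical

open Finset
set_option linter.unusedSectionVars false
set_option maxHeartbeats 1000000



variable {V : Type} [Fintype V] [DecidableEq V] {α : Type}

def Supp (W : Finset V) (G : SimpleGraph V) : Prop := ∀ ⦃u v : V⦄, G.Adj u v → u ∈ W ∧ v ∈ W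

noncomputable def ec {W : Type} (G : SimpleGraph W) : ℕ := G.edgeSet.ncard

lemma ec_eq_natCard {W : Type} (G : SimpleGraph W) : Nat.card G.edgeSet = ec G :=
  Nat.card_coe_set_eq _

lemma ec_eq_card_edgeFinset {W : Type} [Fintype W] (G : SimpleGraph W)
    [Fintype G.edgeSet] : ec G = G.edgeFinset.card :=
  Set.ncard_eq_toFinset_card' _

lemma ec_sup {G₁ G₂ : SimpleGraph V} {s t : Finset V} (h₁ : Supp s G₁) (h₂ : Supp t G₂)
    (hst : Disjoint s t) : ec (G₁ ⊔ G₂) = ec G₁ + ec G₂ := by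
  rw [ec, ec, ec, SimpleGraph.edgeSet_sup, Set.ncard_union_eq _ (Set.toFinite _) (Set.toFinite _)]
  rw [Set.disjoint_left]
  intro e he1 he2
  induction e with
  | h u v =>
    rw [SimpleGraph.mem_edgeSet] at he1 he2
    exact Finset.disjoint_left.mp hst (h₁ he1).1 (h₂ he2).1

lemma ec_induce {G : SimpleGraph V} {s : Finset V} (h : Supp s G) :
    ec (G.induce ↑s) = ec G := by
  rw [ec_eq_card_edgeFinset, ec_eq_card_edgeFinset]
  apply Finset.card_bij (fun e _ => Sym2.map (Subtype.val) e)
  · intro e he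
    induction e with
    | h a b =>
      rw [SimpleGraph.mem_edgeFinset] at he ⊢
      rw [Sym2.map_pair_eq, SimpleGraph.mem_edgeSet]
      rw [SimpleGraph.mem_edgeSet] at he
      exact he
  · intro e₁ h₁ e₂ h₂ heq
    exact Sym2.map.injective Subtype.val_injective heq
  · intro e he
    induction e with
    | h u v =>
      rw [SimpleGraph.mem_edgeFinset, SimpleGraph.mem_edgeSet] at he
      refine ⟨s(⟨u, (h he).1⟩, ⟨v, (h he).2⟩), ?_, rfl⟩
      rw [SimpleGraph.mem_edgeFinset, SimpleGraph.mem_edgeSet]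
      exact he

lemma ec_of_iso {W₁ W₂ : Type} [Fintype W₁] [Fintype W₂] {G₁ : SimpleGraph W₁}
    {G₂ : SimpleGraph W₂} (e : G₁ ≃g G₂) : ec G₁ = ec G₂ := by
  rw [ec_eq_card_edgeFinset, ec_eq_card_edgeFinset]
  exact SimpleGraph.Iso.card_edgeFinset_eq e





lemma sum_supp (W : Finset V) :
    ∑ G ∈ univ.filter (fun G : SimpleGraph V => Supp W G), (-1:ℚ)^(ec G)
      = if W.card ≤ 1 then 1 else 0 := by
  classical
  set D : Finset (Sym2 V) := univ.filter (fun e => ¬ e.IsDiag ∧ ∀ x ∈ e, x ∈ W) with hD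
  have key : ∑ G ∈ univ.filter (fun G : SimpleGraph V => Supp W G), (-1:ℚ)^(ec G)
      = ∑ A ∈ D.powerset, (-1:ℚ)^(A.card) := by
    refine Finset.sum_nbij' (fun G => G.edgeFinset)
      (fun A => SimpleGraph.fromEdgeSet (↑A)) ?_ ?_ ?_ ?_ ?_
    · intro G hG
      simp only [mem_filter, mem_univ, true_and] at hG
      simp only [mem_powerset, hD]
      intro e he
      rw [SimpleGraph.mem_edgeFinset] at he
      induction e with
      | h u v =>
        simp only [mem_filter, mem_univ, true_and, Sym2.isDiag_iff_proj_eq, Sym2.mem_iff]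
        rw [SimpleGraph.mem_edgeSet] at he
        refine ⟨he.ne, ?_⟩
        rintro x (rfl | rfl)
        · exact (hG he).1
        · exact (hG he).2
    · intro A hA
      simp only [mem_powerset, hD] at hA
      simp only [mem_filter, mem_univ, true_and]
      intro u v huv
      rw [SimpleGraph.fromEdgeSet_adj] at huv
      have := hA huv.1
      simp only [mem_filter, mem_univ, true_and] at this
      exact ⟨this.2 u (by simp), this.2 v (by simp)⟩
    · intro G hG
      show SimpleGraph.fromEdgeSet (↑G.edgeFinset) = G
      rw [SimpleGraph.coe_edgeFinset, SimpleGraph.fromEdgeSet_edgeSet]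
    · intro A hA
      simp only [mem_powerset, hD] at hA
      apply Finset.coe_injective
      simp only [SimpleGraph.coe_edgeFinset, SimpleGraph.edgeSet_fromEdgeSet]
      ext e
      simp only [Set.mem_diff, Finset.mem_coe, Set.mem_setOf_eq]
      constructor
      · rintro ⟨he, -⟩; exact he
      · intro he
        have := hA he
        simp only [mem_filter, mem_univ, true_and] at this
        exact ⟨he, this.1⟩
    · intro G hG
      rw [ec_eq_card_edgeFinset]
  have hcast : ∑ A ∈ D.powerset, (-1:ℚ)^(A.card) = if D = ∅ then 1 else 0 := by
    have h := congrArg (fun z : ℤ => (z : ℚ)) (Finset.sum_powerset_neg_one_pow_card (x := D))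
    push_cast at h
    rw [h]
  rw [key, hcast]
  congr 1
  simp only [eq_iff_iff]
  constructor
  · intro h
    by_contra hW
    push_neg at hW
    obtain ⟨x, hx, y, hy, hxy⟩ := Finset.one_lt_card.mp hW
    have : s(x,y) ∈ D := by
      simp only [hD, mem_filter, mem_univ, true_and, Sym2.isDiag_iff_proj_eq, Sym2.mem_iff]
      exact ⟨hxy, by rintro z (rfl | rfl) <;> assumption⟩
    rw [h] at this
    exact absurd this (Finset.notMem_empty _)
  · intro h
    ext e
    simp only [hD, mem_filter, mem_univ, true_and, Finset.notMem_empty, iff_false, not_and]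
    induction e with
    | h u v =>
      intro hd hm
      rw [Sym2.isDiag_iff_proj_eq] at hd
      exact hd (by
        have hu := hm u (by simp)
        have hv := hm v (by simp)
        by_contra hne
        exact absurd (Finset.one_lt_card.mpr ⟨u, hu, v, hv, hne⟩) (by omega))




/-- restriction of a graph to edges inside `s` -/
def restr (G : SimpleGraph V) (s : Finset V) : SimpleGraph V where
  Adj u v := G.Adj u v ∧ u ∈ s ∧ v ∈ s
  symm := ⟨by intro u v ⟨h, hu, hv⟩; exact ⟨h.symm, hv, hu⟩⟩
  loopless := ⟨by intro u ⟨h, _, _⟩; exact G.irrefl h⟩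

lemma restr_adj (G : SimpleGraph V) (s : Finset V) (u v : V) :
    (restr G s).Adj u v ↔ G.Adj u v ∧ u ∈ s ∧ v ∈ s := Iff.rfl

/-- `s` is (the vertex set of) a component of `G` isomorphic to `F`. -/
def IsComp (F : SimpleGraph α) (G : SimpleGraph V) (s : Finset V) : Prop :=
  (∀ u ∈ s, ∀ v : V, G.Adj u v → v ∈ s) ∧ Nonempty (G.induce ↑s ≃g F)

/-- adjacency agreeing on `s` gives iso of induced graphs -/
def induceIsoOfAgree {G G' : SimpleGraph V} {s : Finset V}
    (h : ∀ u ∈ s, ∀ v ∈ s, (G.Adj u v ↔ G'.Adj u v)) :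
    G.induce ↑s ≃g G'.induce ↑s where
  toEquiv := Equiv.refl _
  map_rel_iff' := by
    intro a b
    simp only [Equiv.refl_apply, SimpleGraph.comap_adj, Function.Embedding.coe_subtype]
    exact (h a a.2 b b.2).symm

lemma isComp_congr {G G' : SimpleGraph V} {F : SimpleGraph α} {s : Finset V}
    (hadj : ∀ u ∈ s, ∀ v ∈ s, (G.Adj u v ↔ G'.Adj u v))
    (hcl : ∀ u ∈ s, ∀ v : V, G'.Adj u v → v ∈ s) (h : IsComp F G s) : IsComp F G' s :=
  ⟨hcl, (h.2.map (fun e => ((induceIsoOfAgree hadj).symm.trans e)))⟩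

/-- In a connected graph with at least two vertices every vertex has a neighbour. -/
lemma exists_adj_of_connected {W : Type} (H : SimpleGraph W) [Fintype W]
    (hconn : H.Connected) (h2 : 2 ≤ Fintype.card W) (v : W) : ∃ w, H.Adj v w := by
  obtain ⟨u, hu⟩ := Fintype.exists_ne_of_one_lt_card (by omega) v
  obtain ⟨p⟩ := hconn.preconnected v u
  cases p with
  | nil => exact absurd rfl hu.symm
  | cons h _ => exact ⟨_, h⟩

/-- every vertex of an `F`-component is incident to an edge (for connected `F` with `≥2` vtcs) -/
lemma isComp_mem_of_supp {F : SimpleGraph α} [Fintype α] (hconn : F.Connected)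
    (h2 : 2 ≤ Fintype.card α) {G : SimpleGraph V} {s : Finset V}
    (h : IsComp F G s) {W : Finset V} (hW : ∀ ⦃u v : V⦄, G.Adj u v → u ∈ W ∧ v ∈ W) :
    s ⊆ W := by
  intro u hu
  obtain ⟨e⟩ := h.2
  have hconn' : (G.induce ↑s).Connected := e.connected_iff.mpr hconn
  have hcard : Fintype.card (↑(↑s : Set V)) = Fintype.card α := by
    exact Fintype.card_congr e.toEquiv
  obtain ⟨w, hw⟩ := exists_adj_of_connected _ hconn' (by omega) (⟨u, hu⟩ : ↑(↑s : Set V))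
  have : G.Adj u ↑w := hw
  exact (hW this).1

/-- reachability within an induced closed set propagates membership in another closed set -/
lemma closed_reach {G : SimpleGraph V} {s t : Finset V}
    (hcl : ∀ u ∈ t, ∀ v : V, G.Adj u v → v ∈ t)
    {a b : ↑(↑s : Set V)} (p : (G.induce ↑s).Walk a b) (ha : (a : V) ∈ t) : (b : V) ∈ t := by
  induction p with
  | nil => exact ha
  | @cons u v w h _ ih =>
    have : G.Adj ↑u ↑v := h
    exact ih (hcl _ ha _ this)

/-- two distinct `F`-components are disjoint -/
lemma isComp_disjoint {F : SimpleGraph α} [Fintype α] (hconn : F.Connected)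
    {G : SimpleGraph V} {s t : Finset V}
    (hs : IsComp F G s) (ht : IsComp F G t) (hne : s ≠ t) : Disjoint s t := by
  rw [Finset.disjoint_left]
  by_contra hx
  push_neg at hx
  obtain ⟨x, hxs, hxt⟩ := hx
  apply hne
  have key : ∀ (s t : Finset V), IsComp F G s → IsComp F G t → ∀ x, x ∈ s → x ∈ t → s ⊆ t := by
    intro s t hs ht x hxs hxt y hys
    obtain ⟨e⟩ := hs.2
    have hconn' : (G.induce ↑s).Connected := e.connected_iff.mpr hconn
    obtain ⟨p⟩ := hconn'.preconnected ⟨x, hxs⟩ ⟨y, hys⟩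
    exact closed_reach ht.1 p hxt
  exact Finset.Subset.antisymm (key s t hs ht x hxs hxt) (key t s ht hs x hxt hxs)


variable {f : ℕ}

/-- permutation action on graphs -/
noncomputable instance permAction (n : ℕ) : MulAction (Equiv.Perm (Fin n)) (SimpleGraph (Fin n)) where
  smul σ G := G.comap ⇑σ⁻¹
  one_smul G := by
    ext x y
    change G.Adj ((1 : Equiv.Perm (Fin n))⁻¹ x) ((1 : Equiv.Perm (Fin n))⁻¹ y) ↔ G.Adj x y
    simp
  mul_smul σ τ G := by
    ext x y
    change G.Adj ((σ * τ)⁻¹ x) ((σ * τ)⁻¹ y) ↔ G.Adj (τ⁻¹ (σ⁻¹ x)) (τ⁻¹ (σ⁻¹ y))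
    simp

lemma smul_adj (σ : Equiv.Perm (Fin f)) (G : SimpleGraph (Fin f)) (x y : Fin f) :
    (σ • G).Adj x y ↔ G.Adj (σ⁻¹ x) (σ⁻¹ y) := Iff.rfl

lemma orbit_eq (F : SimpleGraph (Fin f)) :
    MulAction.orbit (Equiv.Perm (Fin f)) F = {H | Nonempty (H ≃g F)} := by
  ext H
  constructor
  · rintro ⟨σ, rfl⟩
    refine ⟨⟨σ.symm, ?_⟩⟩
    intro x y
    rw [smul_adj]
    exact Iff.rfl
  · rintro ⟨φ⟩
    refine ⟨(φ.toEquiv.symm : Equiv.Perm (Fin f)), ?_⟩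
    ext x y
    rw [smul_adj]
    simp only [Equiv.Perm.inv_def]
    change F.Adj (φ.toEquiv x) (φ.toEquiv y) ↔ H.Adj x y
    exact φ.map_rel_iff

noncomputable def stabEquivAut (F : SimpleGraph (Fin f)) :
    MulAction.stabilizer (Equiv.Perm (Fin f)) F ≃ (F ≃g F) where
  toFun σ := ⟨σ.1.symm, by
    intro x y
    have h : (σ.1 • F) = F := σ.2
    conv_rhs => rw [← h]
    rw [smul_adj]
    exact Iff.rfl⟩
  invFun φ := ⟨(φ.toEquiv.symm : Equiv.Perm (Fin f)), by
    rw [MulAction.mem_stabilizer_iff]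
    ext x y
    rw [smul_adj]
    simp only [Equiv.Perm.inv_def]
    change F.Adj (φ.toEquiv x) (φ.toEquiv y) ↔ F.Adj x y
    exact φ.map_rel_iff⟩
  left_inv σ := by
    apply Subtype.ext
    ext x
    rfl
  right_inv φ := by
    ext x
    rfl

lemma aut_card_pos (F : SimpleGraph (Fin f)) : 0 < Nat.card (F ≃g F) := by
  have h1 : Finite (F ≃g F) := Finite.of_equiv _ (stabEquivAut F)
  have h2 : Nonempty (F ≃g F) := ⟨RelIso.refl _⟩
  exact Nat.card_pos

/-- orbit-stabilizer count -/
lemma card_iso_graphs (F : SimpleGraph (Fin f)) :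
    (Finset.univ.filter (fun H : SimpleGraph (Fin f) => Nonempty (H ≃g F))).card
      * Nat.card (F ≃g F) = Nat.factorial f := by
  classical
  have h1 := MulAction.card_orbit_mul_card_stabilizer_eq_card_group (Equiv.Perm (Fin f)) F
  have horb : Fintype.card (MulAction.orbit (Equiv.Perm (Fin f)) F)
      = (Finset.univ.filter (fun H : SimpleGraph (Fin f) => Nonempty (H ≃g F))).card := by
    rw [← Fintype.card_coe]
    apply Fintype.card_congr
    apply Equiv.subtypeEquiv (Equiv.refl _)
    intro H
    rw [orbit_eq F]
    simp
  have hstab : Fintype.card (MulAction.stabilizer (Equiv.Perm (Fin f)) F)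
      = Nat.card (F ≃g F) := by
    rw [← Nat.card_eq_fintype_card]
    exact Nat.card_congr (stabEquivAut F)
  rw [horb, hstab] at h1
  rw [h1, Fintype.card_perm, Fintype.card_fin]

section Chunk5
variable {V : Type} [Fintype V] [DecidableEq V] {f : ℕ}

lemma card_Ys (F : SimpleGraph (Fin f)) (s : Finset V) (hs : s.card = f) :
    (Finset.univ.filter (fun G : SimpleGraph V =>
        Supp s G ∧ Nonempty (G.induce ↑s ≃g F))).card
      = (Finset.univ.filter (fun H : SimpleGraph (Fin f) => Nonempty (H ≃g F))).card := by
  classical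
  have hcard : Fintype.card (↑(↑s : Set V)) = f := by
    simp [hs]
  let e : (↑(↑s : Set V)) ≃ Fin f := Fintype.equivFinOfCardEq hcard
  -- the forward map
  let i : SimpleGraph V → SimpleGraph (Fin f) := fun G => (G.induce ↑s).comap ⇑e.symm
  have iso_i : ∀ G : SimpleGraph V, (i G) ≃g (G.induce ↑s) := by
    intro G
    exact ⟨e.symm, Iff.rfl⟩
  apply Finset.card_bij (fun G _ => i G)
  · intro G hG
    simp only [Finset.mem_filter, Finset.mem_univ, true_and] at hG ⊢
    obtain ⟨-, ⟨φ⟩⟩ := hG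
    exact ⟨(iso_i G).trans φ⟩
  · intro G₁ h₁ G₂ h₂ heq
    simp only [Finset.mem_filter, Finset.mem_univ, true_and] at h₁ h₂
    have key : ∀ a b : (↑(↑s : Set V)), (G₁.induce ↑s).Adj a b ↔ (G₂.induce ↑s).Adj a b := by
      intro a b
      have h := congrFun (congrFun (congrArg SimpleGraph.Adj heq) (e a)) (e b)
      simp only [i, SimpleGraph.comap_adj, Equiv.symm_apply_apply] at h
      exact iff_of_eq h
    ext u v
    constructor
    · intro hadj
      obtain ⟨hu, hv⟩ := h₁.1 hadj
      exact (key ⟨u, hu⟩ ⟨v, hv⟩).mp hadj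
    · intro hadj
      obtain ⟨hu, hv⟩ := h₂.1 hadj
      exact (key ⟨u, hu⟩ ⟨v, hv⟩).mpr hadj
  · intro H hH
    simp only [Finset.mem_filter, Finset.mem_univ, true_and] at hH
    obtain ⟨φ⟩ := hH
    set G₀ : SimpleGraph V :=
      { Adj := fun u v => ∃ (hu : u ∈ s) (hv : v ∈ s), H.Adj (e ⟨u,hu⟩) (e ⟨v,hv⟩)
        symm := ⟨by intro u v ⟨hu, hv, h⟩; exact ⟨hv, hu, h.symm⟩⟩
        loopless := ⟨by intro u ⟨hu, hv, h⟩; exact H.irrefl h⟩ } with hG₀def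
    have hfix : ∀ (z : Fin f) (h : ((e.symm z : V)) ∈ s), (e ⟨(e.symm z : V), h⟩) = z := by
      intro z h
      have h2 : (⟨(e.symm z : V), h⟩ : ↑(↑s : Set V)) = e.symm z := Subtype.ext rfl
      rw [h2, Equiv.apply_symm_apply]
    have hiG : i G₀ = H := by
      ext x y
      simp only [i, SimpleGraph.comap_adj]
      constructor
      · rintro ⟨hu, hv, h⟩
        simp only [Function.Embedding.coe_subtype] at h
        rwa [hfix, hfix] at h
      · intro h
        refine ⟨(e.symm x).2, (e.symm y).2, ?_⟩
        simp only [Function.Embedding.coe_subtype]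
        rwa [hfix, hfix]
    refine ⟨G₀, ?_, hiG⟩
    simp only [Finset.mem_filter, Finset.mem_univ, true_and]
    refine ⟨fun u v h => ⟨h.1, h.2.1⟩, ⟨(iso_i G₀).symm.trans (by rw [hiG]; exact φ)⟩⟩
end Chunk5
section Chunk6
variable {V : Type} [Fintype V] [DecidableEq V] {f : ℕ}

noncomputable def cF (f : ℕ) (F : SimpleGraph (Fin f)) : ℚ :=
  (-1)^(ec F) * ((Finset.univ.filter
    (fun H : SimpleGraph (Fin f) => Nonempty (H ≃g F))).card : ℚ)

noncomputable def NWP (F : SimpleGraph (Fin f)) (W : Finset V) (P : Finset (Finset V)) : ℚ :=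
  ∑ G ∈ Finset.univ.filter
      (fun G : SimpleGraph V => Supp W G ∧ ∀ s ∈ P, IsComp F G s),
    (-1:ℚ)^(ec G)

lemma supp_restr (G : SimpleGraph V) (s : Finset V) : Supp s (restr G s) :=
  fun _ _ h => ⟨h.2.1, h.2.2⟩

lemma peel (F : SimpleGraph (Fin f)) (W s : Finset V) (Q : Finset (Finset V))
    (hsW : s ⊆ W) (hsf : s.card = f) (hsQ : s ∉ Q)
    (hQW : ∀ t ∈ Q, t ⊆ W) (hdisj : ∀ t ∈ Q, Disjoint s t) :
    NWP F W (insert s Q) = cF f F * NWP F (W \ s) Q := by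
  classical
  set Y : Finset (SimpleGraph V) := Finset.univ.filter
    (fun H : SimpleGraph V => Supp s H ∧ Nonempty (H.induce ↑s ≃g F)) with hY
  set Z' : Finset (SimpleGraph V) := Finset.univ.filter
    (fun G' : SimpleGraph V => Supp (W \ s) G' ∧ ∀ t ∈ Q, IsComp F G' t) with hZ'
  have hsWs : Disjoint s (W \ s) := Finset.disjoint_sdiff
  have key : NWP F W (insert s Q)
      = ∑ p ∈ Y ×ˢ Z', ((-1:ℚ)^(ec p.1) * (-1:ℚ)^(ec p.2)) := by
    rw [NWP]
    refine Finset.sum_nbij' (fun G => (restr G s, restr G (W \ s)))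
      (fun p => p.1 ⊔ p.2) ?_ ?_ ?_ ?_ ?_
    · -- membership forward
      intro G hG
      simp only [Finset.mem_filter, Finset.mem_univ, true_and] at hG
      obtain ⟨hSupp, hcomp⟩ := hG
      have hcs : IsComp F G s := hcomp s (Finset.mem_insert_self s Q)
      rw [Finset.mem_product]
      constructor
      · simp only [hY, Finset.mem_filter, Finset.mem_univ, true_and]
        refine ⟨supp_restr G s, ?_⟩
        obtain ⟨φ⟩ := hcs.2
        refine ⟨((induceIsoOfAgree ?_).trans φ)⟩
        intro u hu v hv
        rw [restr_adj]
        tauto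
      · simp only [hZ', Finset.mem_filter, Finset.mem_univ, true_and]
        refine ⟨supp_restr G _, ?_⟩
        intro t ht
        have htWs : t ⊆ W \ s := Finset.subset_sdiff.mpr ⟨hQW t ht, (hdisj t ht).symm⟩
        have hct : IsComp F G t := hcomp t (Finset.mem_insert_of_mem ht)
        refine isComp_congr ?_ ?_ hct
        · intro u hu v hv
          rw [restr_adj]
          have := htWs hu; have := htWs hv
          tauto
        · intro u hu v hadj
          rw [restr_adj] at hadj
          exact hct.1 u hu v hadj.1
    · -- membership backward
      rintro ⟨H, G'⟩ hp
      rw [Finset.mem_product] at hp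
      obtain ⟨hH, hG'⟩ := hp
      simp only [hY, Finset.mem_filter, Finset.mem_univ, true_and] at hH
      simp only [hZ', Finset.mem_filter, Finset.mem_univ, true_and] at hG'
      simp only [Finset.mem_filter, Finset.mem_univ, true_and]
      have hnoH : ∀ ⦃u v : V⦄, H.Adj u v → u ∈ s ∧ v ∈ s := hH.1
      have hnoG' : ∀ ⦃u v : V⦄, G'.Adj u v → u ∈ W \ s ∧ v ∈ W \ s := hG'.1
      constructor
      · intro u v huv
        rcases huv with h | h
        · exact ⟨hsW (hnoH h).1, hsW (hnoH h).2⟩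
        · exact ⟨Finset.sdiff_subset (hnoG' h).1, Finset.sdiff_subset (hnoG' h).2⟩
      · intro t ht
        rcases Finset.mem_insert.mp ht with rfl | ht'
        · -- IsComp for s
          constructor
          · intro u hu v hadj
            rcases hadj with h | h
            · exact (hnoH h).2
            · exact absurd hu (Finset.disjoint_left.mp hsWs.symm (hnoG' h).1).elim
          · obtain ⟨φ⟩ := hH.2
            refine ⟨((induceIsoOfAgree ?_).symm.trans φ)⟩
            intro u hu v hv
            constructor
            · intro h; exact Or.inl h
            · rintro (h | h)
              · exact h
              · exact absurd hu (Finset.disjoint_left.mp hsWs.symm (hnoG' h).1).elim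
        · -- IsComp for t ∈ Q
          have htWs : t ⊆ W \ s := Finset.subset_sdiff.mpr ⟨hQW t ht', (hdisj t ht').symm⟩
          have hct : IsComp F G' t := hG'.2 t ht'
          refine isComp_congr ?_ ?_ hct
          · intro u hu v hv
            constructor
            · intro h; exact Or.inr h
            · rintro (h | h)
              · exact absurd (htWs hu) (Finset.disjoint_right.mp hsWs.symm (hnoH h).1).elim
              · exact h
          · intro u hu v hadj
            rcases hadj with h | h
            · exact absurd (htWs hu) (Finset.disjoint_right.mp hsWs.symm (hnoH h).1).elim
            · exact hct.1 u hu v h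
    · -- left inverse
      intro G hG
      simp only [Finset.mem_filter, Finset.mem_univ, true_and] at hG
      obtain ⟨hSupp, hcomp⟩ := hG
      have hcs : IsComp F G s := hcomp s (Finset.mem_insert_self s Q)
      show restr G s ⊔ restr G (W \ s) = G
      ext u v
      simp only [SimpleGraph.sup_adj, restr_adj]
      constructor
      · rintro (⟨h, -⟩ | ⟨h, -⟩) <;> exact h
      · intro h
        by_cases hu : u ∈ s
        · exact Or.inl ⟨h, hu, hcs.1 u hu v h⟩
        · have hv : v ∉ s := fun hv => hu (hcs.1 v hv u h.symm)
          have := hSupp h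
          exact Or.inr ⟨h, Finset.mem_sdiff.mpr ⟨this.1, hu⟩, Finset.mem_sdiff.mpr ⟨this.2, hv⟩⟩
    · -- right inverse
      rintro ⟨H, G'⟩ hp
      rw [Finset.mem_product] at hp
      obtain ⟨hH, hG'⟩ := hp
      simp only [hY, Finset.mem_filter, Finset.mem_univ, true_and] at hH
      simp only [hZ', Finset.mem_filter, Finset.mem_univ, true_and] at hG'
      have hnoH : ∀ ⦃u v : V⦄, H.Adj u v → u ∈ s ∧ v ∈ s := hH.1
      have hnoG' : ∀ ⦃u v : V⦄, G'.Adj u v → u ∈ W \ s ∧ v ∈ W \ s := hG'.1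
      have e1 : restr (H ⊔ G') s = H := by
        ext u v
        simp only [restr_adj, SimpleGraph.sup_adj]
        constructor
        · rintro ⟨h | h, hu, hv⟩
          · exact h
          · exact absurd hu (Finset.disjoint_left.mp hsWs.symm (hnoG' h).1).elim
        · intro h
          exact ⟨Or.inl h, (hnoH h).1, (hnoH h).2⟩
      have e2 : restr (H ⊔ G') (W \ s) = G' := by
        ext u v
        simp only [restr_adj, SimpleGraph.sup_adj]
        constructor
        · rintro ⟨h | h, hu, hv⟩
          · exact absurd (hnoH h).1 (Finset.disjoint_right.mp hsWs hu).elim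
          · exact h
        · intro h
          exact ⟨Or.inr h, (hnoG' h).1, (hnoG' h).2⟩
      show (restr (H ⊔ G') s, restr (H ⊔ G') (W \ s)) = (H, G')
      rw [e1, e2]
    · -- values
      intro G hG
      simp only [Finset.mem_filter, Finset.mem_univ, true_and] at hG
      obtain ⟨hSupp, hcomp⟩ := hG
      have hcs : IsComp F G s := hcomp s (Finset.mem_insert_self s Q)
      have hdecomp : restr G s ⊔ restr G (W \ s) = G := by
        ext u v
        simp only [SimpleGraph.sup_adj, restr_adj]
        constructor
        · rintro (⟨h, -⟩ | ⟨h, -⟩) <;> exact h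
        · intro h
          by_cases hu : u ∈ s
          · exact Or.inl ⟨h, hu, hcs.1 u hu v h⟩
          · have hv : v ∉ s := fun hv => hu (hcs.1 v hv u h.symm)
            have := hSupp h
            exact Or.inr ⟨h, Finset.mem_sdiff.mpr ⟨this.1, hu⟩, Finset.mem_sdiff.mpr ⟨this.2, hv⟩⟩
      have : ec G = ec (restr G s) + ec (restr G (W \ s)) := by
        conv_lhs => rw [← hdecomp]
        exact ec_sup (supp_restr G s) (supp_restr G (W \ s)) hsWs
      rw [this, pow_add]
  rw [key, Finset.sum_product]
  have hYval : ∀ H ∈ Y, (-1:ℚ)^(ec H) = (-1:ℚ)^(ec F) := by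
    intro H hH
    simp only [hY, Finset.mem_filter, Finset.mem_univ, true_and] at hH
    obtain ⟨hSupp, ⟨φ⟩⟩ := hH
    rw [← ec_induce hSupp, ec_of_iso φ]
  calc ∑ x ∈ Y, ∑ y ∈ Z', (-1:ℚ)^(ec x) * (-1:ℚ)^(ec y)
      = ∑ x ∈ Y, ((-1:ℚ)^(ec x) * ∑ y ∈ Z', (-1:ℚ)^(ec y)) := by
        congr 1; ext x; rw [Finset.mul_sum]
    _ = ∑ x ∈ Y, ((-1:ℚ)^(ec F) * NWP F (W \ s) Q) := by
        apply Finset.sum_congr rfl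
        intro x hx
        rw [hYval x hx, NWP, hZ']
    _ = (Y.card : ℚ) * ((-1:ℚ)^(ec F) * NWP F (W \ s) Q) := by
        rw [Finset.sum_const, nsmul_eq_mul]
    _ = cF f F * NWP F (W \ s) Q := by
        rw [cF, hY, card_Ys F s hsf]
        ring
end Chunk6
section Chunk7
variable {V : Type} [Fintype V] [DecidableEq V] {f : ℕ}

lemma NWP_eq (F : SimpleGraph (Fin f)) (P : Finset (Finset V)) (W : Finset V)
    (hsub : ∀ s ∈ P, s ⊆ W) (hdisj : ∀ s ∈ P, ∀ t ∈ P, s ≠ t → Disjoint s t)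
    (hcard : ∀ s ∈ P, s.card = f) :
    NWP F W P = cF f F ^ P.card * (if W.card ≤ f * P.card + 1 then 1 else 0) := by
  classical
  induction P using Finset.induction_on generalizing W with
  | empty =>
    have h1 : NWP F W ∅ = ∑ G ∈ Finset.univ.filter (fun G : SimpleGraph V => Supp W G),
        (-1:ℚ)^(ec G) := by
      rw [NWP]
      congr 1
      apply Finset.filter_congr
      intro G _
      simp
    rw [h1, sum_supp W]
    simp
  | @insert s Q hsQ ih =>
    have hsW : s ⊆ W := hsub s (Finset.mem_insert_self s Q)
    have hsf : s.card = f := hcard s (Finset.mem_insert_self s Q)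
    have hQW : ∀ t ∈ Q, t ⊆ W := fun t ht => hsub t (Finset.mem_insert_of_mem ht)
    have hsd : ∀ t ∈ Q, Disjoint s t := fun t ht =>
      hdisj s (Finset.mem_insert_self s Q) t (Finset.mem_insert_of_mem ht)
        (fun h => hsQ (h ▸ ht))
    rw [peel F W s Q hsW hsf hsQ hQW hsd]
    rw [ih (W \ s)
      (fun t ht => Finset.subset_sdiff.mpr ⟨hQW t ht, (hsd t ht).symm⟩)
      (fun t₁ h₁ t₂ h₂ hne => hdisj t₁ (Finset.mem_insert_of_mem h₁) t₂
        (Finset.mem_insert_of_mem h₂) hne)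
      (fun t ht => hcard t (Finset.mem_insert_of_mem ht))]
    have hWc : (W \ s).card = W.card - f := by
      rw [Finset.card_sdiff_of_subset hsW, hsf]
    have hfW : f ≤ W.card := hsf ▸ Finset.card_le_card hsW
    have hcins : (insert s Q).card = Q.card + 1 := Finset.card_insert_of_notMem hsQ
    rw [hWc, hcins]
    have hiff : (W.card - f ≤ f * Q.card + 1) ↔ (W.card ≤ f * (Q.card + 1) + 1) := by
      constructor <;> intro h
      · have := Nat.sub_le_iff_le_add.mp h
        calc W.card ≤ f * Q.card + 1 + f := this
          _ = f * (Q.card + 1) + 1 := by ring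
      · apply Nat.sub_le_iff_le_add.mpr
        calc W.card ≤ f * (Q.card + 1) + 1 := h
          _ = f * Q.card + 1 + f := by ring
    by_cases hc : W.card - f ≤ f * Q.card + 1
    · rw [if_pos hc, if_pos (hiff.mp hc)]
      ring
    · rw [if_neg hc, if_neg (fun h => hc (hiff.mpr h))]
      ring
end Chunk7
section Chunk8
variable {V : Type} [Fintype V] [DecidableEq V] {f : ℕ}

noncomputable def famF (f : ℕ) (W : Finset V) (m : ℕ) : Finset (Finset (Finset V)) :=
  Finset.univ.filter (fun P : Finset (Finset V) =>
    P.card = m ∧ (∀ s ∈ P, s ⊆ W ∧ s.card = f) ∧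
    (∀ s ∈ P, ∀ t ∈ P, s ≠ t → Disjoint s t))

lemma card_fam (hf1 : 1 ≤ f) : ∀ m : ℕ, ∀ W : Finset V, m * f ≤ W.card →
    (famF f W m).card * ((Nat.factorial f)^m * Nat.factorial m)
        * Nat.factorial (W.card - m * f) = Nat.factorial W.card := by
  intro m
  induction m with
  | zero =>
    intro W _
    have : famF f W 0 = {∅} := by
      ext P
      simp only [famF, Finset.mem_filter, Finset.mem_univ, true_and, Finset.mem_singleton,
        Finset.card_eq_zero]
      constructor
      · rintro ⟨rfl, -, -⟩; rfl
      · rintro rfl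
        exact ⟨rfl, by simp, by simp⟩
    rw [this]
    simp
  | succ m ih =>
    intro W hmf
    have hfW : f ≤ W.card := le_trans (by nlinarith) hmf
    -- double counting
    have hbij : ∀ s ∈ Finset.powersetCard f W,
        (Finset.univ.filter (fun P => P ∈ famF f W (m+1) ∧ s ∈ P)).card
          = (famF f (W \ s) m).card := by
      intro s hs
      rw [Finset.mem_powersetCard] at hs
      apply Finset.card_bij (fun P _ => P.erase s)
      · intro P hP
        simp only [Finset.mem_filter, Finset.mem_univ, true_and, famF] at hP ⊢
        obtain ⟨⟨hc, hblocks, hdisj⟩, hsP⟩ := hP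
        refine ⟨by rw [Finset.card_erase_of_mem hsP, hc]; omega, ?_, ?_⟩
        · intro t ht
          have ht' := Finset.mem_of_mem_erase ht
          have hts : t ≠ s := Finset.ne_of_mem_erase ht
          refine ⟨Finset.subset_sdiff.mpr ⟨(hblocks t ht').1, ?_⟩, (hblocks t ht').2⟩
          exact (hdisj s hsP t ht' (Ne.symm hts)).symm
        · intro t₁ h₁ t₂ h₂ hne
          exact hdisj t₁ (Finset.mem_of_mem_erase h₁) t₂ (Finset.mem_of_mem_erase h₂) hne
      · intro P₁ h₁ P₂ h₂ heq
        simp only [Finset.mem_filter, Finset.mem_univ, true_and] at h₁ h₂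
        have e1 : insert s (P₁.erase s) = P₁ := Finset.insert_erase h₁.2
        have e2 : insert s (P₂.erase s) = P₂ := Finset.insert_erase h₂.2
        rw [← e1, ← e2, heq]
      · intro P' hP'
        simp only [famF, Finset.mem_filter, Finset.mem_univ, true_and] at hP'
        obtain ⟨hc, hblocks, hdisj⟩ := hP'
        have hsP' : s ∉ P' := by
          intro hmem
          have := (hblocks s hmem).1
          have hne : s.Nonempty := Finset.card_pos.mp (by rw [hs.2]; omega)
          obtain ⟨x, hx⟩ := hne
          exact absurd (this hx) (by simp [hx])
        refine ⟨insert s P', ?_, ?_⟩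
        · simp only [Finset.mem_filter, Finset.mem_univ, true_and, famF]
          refine ⟨⟨by rw [Finset.card_insert_of_notMem hsP', hc], ?_, ?_⟩,
            Finset.mem_insert_self s P'⟩
          · intro t ht
            rcases Finset.mem_insert.mp ht with rfl | ht'
            · exact ⟨hs.1, hs.2⟩
            · exact ⟨le_trans (hblocks t ht').1 Finset.sdiff_subset, (hblocks t ht').2⟩
          · intro t₁ h₁ t₂ h₂ hne
            rcases Finset.mem_insert.mp h₁ with rfl | h₁' <;>
              rcases Finset.mem_insert.mp h₂ with rfl | h₂'
            · exact absurd rfl hne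
            · exact ((Finset.subset_sdiff.mp (hblocks t₂ h₂').1).2).symm
            · exact (Finset.subset_sdiff.mp (hblocks t₁ h₁').1).2
            · exact hdisj t₁ h₁' t₂ h₂' hne
        · exact Finset.erase_insert hsP'
    have hfilter : ∀ s : Finset V,
        Finset.univ.filter (fun P : Finset (Finset V) => P ∈ famF f W (m+1) ∧ s ∈ P)
          = (famF f W (m+1)).filter (fun P => s ∈ P) := by
      intro s; ext P; simp [Finset.mem_filter]
    have hcard' : ∀ P ∈ famF f W (m+1), P.card = m + 1 := by
      intro P hP
      simp only [famF, Finset.mem_filter, Finset.mem_univ, true_and] at hP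
      exact hP.1
    have hP2 : ∀ P ∈ famF f W (m+1),
        (Finset.powersetCard f W).filter (fun s => s ∈ P) = P := by
      intro P hP
      simp only [famF, Finset.mem_filter, Finset.mem_univ, true_and] at hP
      ext t
      simp only [Finset.mem_filter, Finset.mem_powersetCard]
      exact ⟨fun h => h.2, fun h => ⟨⟨(hP.2.1 t h).1, (hP.2.1 t h).2⟩, h⟩⟩
    have h1 : (famF f W (m+1)).card * (m+1)
        = ∑ s ∈ Finset.powersetCard f W, (famF f (W \ s) m).card := by
      calc (famF f W (m+1)).card * (m+1)
          = ∑ P ∈ famF f W (m+1), P.card := by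
            rw [Finset.sum_congr rfl hcard', Finset.sum_const, smul_eq_mul]
        _ = ∑ P ∈ famF f W (m+1), ((Finset.powersetCard f W).filter (fun s => s ∈ P)).card :=
            Finset.sum_congr rfl (fun P hP => by rw [hP2 P hP])
        _ = ∑ P ∈ famF f W (m+1), ∑ s ∈ Finset.powersetCard f W, (if s ∈ P then 1 else 0) :=
            Finset.sum_congr rfl (fun P hP => by rw [Finset.card_filter])
        _ = ∑ s ∈ Finset.powersetCard f W, ∑ P ∈ famF f W (m+1), (if s ∈ P then 1 else 0) :=
            Finset.sum_comm
        _ = ∑ s ∈ Finset.powersetCard f W, (famF f (W \ s) m).card := by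
            refine Finset.sum_congr rfl (fun s hs => ?_)
            rw [← Finset.card_filter, ← hfilter s, hbij s hs]
    have hWf : m * f ≤ W.card - f := by
      have : m * f + f ≤ W.card := by rw [← Nat.succ_mul]; exact hmf
      omega
    have hks : ∀ s ∈ Finset.powersetCard f W, (W \ s).card = W.card - f := by
      intro s hs
      rw [Finset.mem_powersetCard] at hs
      rw [Finset.card_sdiff_of_subset hs.1, hs.2]
    have hIH : ∀ s ∈ Finset.powersetCard f W,
        (famF f (W \ s) m).card * ((f.factorial)^m * m.factorial)
          * (W.card - f - m * f).factorial = (W.card - f).factorial := by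
      intro s hs
      have h := ih (W \ s) (by rw [hks s hs]; exact hWf)
      rw [hks s hs] at h
      exact h
    have h2 : (famF f W (m+1)).card * (m+1) * ((f.factorial)^m * m.factorial)
          * (W.card - f - m*f).factorial
        = (W.card).choose f * (W.card - f).factorial := by
      rw [h1, Finset.sum_mul, Finset.sum_mul, Finset.sum_congr rfl hIH, Finset.sum_const,
        Finset.card_powersetCard, smul_eq_mul]
    have hsub : W.card - (m+1)*f = W.card - f - m*f := by
      have : (m+1)*f = m*f + f := by rw [Nat.succ_mul]
      omega
    calc (famF f W (m+1)).card * ((f.factorial)^(m+1) * (m+1).factorial)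
          * (W.card - (m+1) * f).factorial
        = ((famF f W (m+1)).card * (m+1) * ((f.factorial)^m * m.factorial)
            * (W.card - f - m*f).factorial) * f.factorial := by
          rw [hsub, Nat.factorial_succ, pow_succ]
          ring
      _ = ((W.card).choose f * (W.card - f).factorial) * f.factorial := by rw [h2]
      _ = (W.card).choose f * f.factorial * (W.card - f).factorial := by ring
      _ = (W.card).factorial := Nat.choose_mul_factorial_mul_factorial hfW
end Chunk8


/-- `G` contains a connected component (an isolated subgraph) isomorphic to `F`: there is a
vertex set `s` closed under adjacency whose induced subgraph is isomorphic to `F`. -/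
def hasIsoComponent {V α : Type} (G : SimpleGraph V) (F : SimpleGraph α) : Prop :=
  ∃ s : Finset V, (∀ u ∈ s, ∀ v : V, G.Adj u v → v ∈ s) ∧
    Nonempty (G.induce ↑s ≃g F)

/-- Let `F` be a connected graph on `f ≥ 2` vertices, `k ≥ f` with
`k = l·f + a`, `a ∈ {0,1}`, `l = ⌊k/f⌋`. Then the alternating-by-edge-count sum over all
graphs on the labeled vertex set `{1,…,k}` having a connected component isomorphic to `F` is
`(-1)^{l+1} (-1)^{l·#E(F)} · k!/((f!)^l l!) · (f!/#Aut F)^l`. -/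
theorem stmt_16 (f : ℕ) (hf : 2 ≤ f) (F : SimpleGraph (Fin f)) (hFconn : F.Connected)
    (k l a : ℕ) (hk : f ≤ k) (ha : a ≤ 1) (hkla : k = l * f + a) :
    ∑ G ∈ Finset.univ.filter (fun G : SimpleGraph (Fin k) => hasIsoComponent G F),
        ((-1 : ℚ)) ^ (Nat.card G.edgeSet)
      = (-1 : ℚ) ^ (l + 1) * (-1 : ℚ) ^ (l * Nat.card F.edgeSet)
          * ((k.factorial : ℚ) / ((f.factorial : ℚ) ^ l * (l.factorial : ℚ)))
          * ((f.factorial : ℚ) / (Nat.card (F ≃g F) : ℚ)) ^ l := by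
  classical
  have hl1 : 1 ≤ l := by
    rcases Nat.eq_zero_or_pos l with rfl | h
    · simp at hkla; omega
    · exact h
  set CG : SimpleGraph (Fin k) → Finset (Finset (Fin k)) :=
    fun G => Finset.univ.filter (fun s => IsComp F G s) with hCG
  have hXiff : ∀ G : SimpleGraph (Fin k), hasIsoComponent G F ↔ (CG G).Nonempty := by
    intro G
    simp only [hCG, Finset.filter_nonempty_iff, Finset.mem_univ, true_and]
    exact Iff.rfl
  have hcardcomp : ∀ (G : SimpleGraph (Fin k)) (s : Finset (Fin k)),
      IsComp F G s → s.card = f := by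
    rintro G s ⟨-, ⟨φ⟩⟩
    have := Fintype.card_congr φ.toEquiv
    simpa using this
  have hmfle : ∀ P : Finset (Finset (Fin k)), (∀ s ∈ P, s.card = f) →
      (∀ s ∈ P, ∀ t ∈ P, s ≠ t → Disjoint s t) → P.card * f ≤ k := by
    intro P h1 h2
    have hb : (P.biUnion id).card = ∑ s ∈ P, s.card := Finset.card_biUnion h2
    have : (P.biUnion id).card = P.card * f := by
      rw [hb, Finset.sum_congr rfl h1, Finset.sum_const, smul_eq_mul]
    calc P.card * f = (P.biUnion id).card := this.symm
      _ ≤ (Finset.univ : Finset (Fin k)).card := Finset.card_le_univ _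
      _ = k := by rw [Finset.card_univ, Fintype.card_fin]
  have hone : ∀ G : SimpleGraph (Fin k), (CG G).Nonempty →
      (1:ℚ) = ∑ P ∈ (CG G).powerset.filter (fun P => P ≠ ∅), (-1:ℚ)^(P.card+1) := by
    intro G hne
    have h0 : ∑ P ∈ (CG G).powerset, (-1:ℚ)^P.card = 0 := by
      have h := congrArg (fun z : ℤ => (z:ℚ))
        (Finset.sum_powerset_neg_one_pow_card (x := CG G))
      push_cast at h
      rw [h, if_neg (Finset.nonempty_iff_ne_empty.mp hne)]
    have hsp := Finset.sum_filter_add_sum_filter_not ((CG G).powerset)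
      (fun P => P = ∅) (fun P => (-1:ℚ)^P.card)
    have hfeq : (CG G).powerset.filter (fun P => P = ∅) = {∅} := by
      ext P
      simp only [Finset.mem_filter, Finset.mem_powerset, Finset.mem_singleton,
        and_iff_right_iff_imp]
      rintro rfl
      exact Finset.empty_subset _
    rw [hfeq, Finset.sum_singleton, h0] at hsp
    simp only [Finset.card_empty, pow_zero] at hsp
    have hneg : ∑ P ∈ (CG G).powerset.filter (fun P => ¬ P = ∅), (-1:ℚ)^P.card = -1 := by
      linarith
    calc (1:ℚ) = -∑ P ∈ (CG G).powerset.filter (fun P => ¬ P = ∅), (-1:ℚ)^P.card := by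
          rw [hneg]; ring
      _ = ∑ P ∈ (CG G).powerset.filter (fun P => P ≠ ∅), (-1:ℚ)^(P.card+1) := by
          rw [← Finset.sum_neg_distrib]
          exact Finset.sum_congr rfl (fun P _ => by rw [pow_succ]; ring)
  -- the value of the inner sum for each family P
  have hT : ∀ P : Finset (Finset (Fin k)),
      (∑ G ∈ Finset.univ.filter
          (fun G : SimpleGraph (Fin k) => P ≠ ∅ ∧ ∀ s ∈ P, IsComp F G s),
        (-1:ℚ)^(ec G) * (-1:ℚ)^(P.card+1))
      = if P ∈ famF f (Finset.univ : Finset (Fin k)) l then (-1:ℚ)^(l+1) * cF f F ^ l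
        else 0 := by
    intro P
    by_cases hP0 : P = ∅
    · subst hP0
      have hemp : Finset.univ.filter
          (fun G : SimpleGraph (Fin k) => (∅ : Finset (Finset (Fin k))) ≠ ∅
            ∧ ∀ s ∈ (∅ : Finset (Finset (Fin k))), IsComp F G s) = ∅ :=
        Finset.filter_eq_empty_iff.mpr (fun G _ h => h.1 rfl)
      rw [hemp, Finset.sum_empty, if_neg]
      simp only [famF, Finset.mem_filter, Finset.mem_univ, true_and]
      rintro ⟨h, -, -⟩
      rw [Finset.card_empty] at h
      omega
    · rw [← Finset.sum_mul]
      by_cases hgood : (∀ s ∈ P, s.card = f) ∧ (∀ s ∈ P, ∀ t ∈ P, s ≠ t → Disjoint s t)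
      · have hfe : Finset.univ.filter
            (fun G : SimpleGraph (Fin k) => P ≠ ∅ ∧ ∀ s ∈ P, IsComp F G s)
            = Finset.univ.filter
            (fun G : SimpleGraph (Fin k) => Supp (Finset.univ : Finset (Fin k)) G
              ∧ ∀ s ∈ P, IsComp F G s) := by
          apply Finset.filter_congr
          intro G _
          simp only [hP0, ne_eq, not_false_iff, true_and, eq_iff_iff]
          constructor
          · intro h; exact ⟨fun u v _ => ⟨Finset.mem_univ u, Finset.mem_univ v⟩, h⟩
          · intro h; exact h.2
        rw [hfe]
        have hN := NWP_eq F P (Finset.univ : Finset (Fin k))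
          (fun s _ => Finset.subset_univ s) hgood.2 hgood.1
        rw [NWP] at hN
        rw [hN]
        have hcu : (Finset.univ : Finset (Fin k)).card = k := by
          rw [Finset.card_univ, Fintype.card_fin]
        rw [hcu]
        have hPf : P.card * f ≤ k := hmfle P hgood.1 hgood.2
        by_cases hPl : P.card = l
        · rw [if_pos (by rw [hPl]; rw [hkla]; rw [Nat.mul_comm f l]; omega), if_pos, hPl]
          · ring
          · simp only [famF, Finset.mem_filter, Finset.mem_univ, true_and]
            exact ⟨hPl, fun s hs => ⟨Finset.subset_univ s, hgood.1 s hs⟩, hgood.2⟩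
        · have hPlt : P.card < l := by
            rcases Nat.lt_or_ge P.card l with h | h
            · exact h
            · exfalso
              have : l * f + a < (l+1) * f := by
                have : a < f := by omega
                calc l * f + a < l * f + f := by omega
                  _ = (l+1) * f := by ring
              have h2 : (l+1) * f ≤ P.card * f :=
                Nat.mul_le_mul_right f (by omega)
              rw [← hkla] at this
              omega
          have hcond : ¬ (k ≤ f * P.card + 1) := by
            intro hcon
            have h1 : f * P.card + 1 ≤ f * (l-1) + 1 := by
              have := Nat.mul_le_mul_left f (by omega : P.card ≤ l - 1)
              omega
            have h2 : f * (l-1) + 1 < l * f + a := by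
              have hfl : f * l - f ≤ f * (l-1) ∧ f * (l-1) ≤ f * l - f := by
                constructor <;> [skip; skip] <;>
                  · have : f * (l-1) = f * l - f * 1 := by
                      rw [← Nat.mul_sub]
                    omega
              have : f * l = l * f := Nat.mul_comm f l
              omega
            rw [← hkla] at h2
            omega
          have hmem : P ∉ famF f (Finset.univ : Finset (Fin k)) l := by
            simp only [famF, Finset.mem_filter, Finset.mem_univ, true_and]
            rintro ⟨h, -, -⟩
            exact hPl h
          rw [if_neg hcond, if_neg hmem]
          ring
      · have hfe : Finset.univ.filter
            (fun G : SimpleGraph (Fin k) => P ≠ ∅ ∧ ∀ s ∈ P, IsComp F G s) = ∅ := by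
          rw [Finset.filter_eq_empty_iff]
          intro G _
          rintro ⟨-, hcomp⟩
          exact hgood ⟨fun s hs => hcardcomp G s (hcomp s hs),
            fun s hs t ht hne => isComp_disjoint hFconn (hcomp s hs) (hcomp t ht) hne⟩
        rw [hfe, Finset.sum_empty, zero_mul, if_neg]
        simp only [famF, Finset.mem_filter, Finset.mem_univ, true_and]
        rintro ⟨-, hb, hd⟩
        exact hgood ⟨fun s hs => (hb s hs).2, hd⟩
  -- main chain
  have main : ∑ G ∈ Finset.univ.filter (fun G : SimpleGraph (Fin k) => hasIsoComponent G F),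
      ((-1 : ℚ)) ^ (Nat.card G.edgeSet)
      = ((famF f (Finset.univ : Finset (Fin k)) l).card : ℚ)
          * ((-1:ℚ)^(l+1) * cF f F ^ l) := by
    calc ∑ G ∈ Finset.univ.filter (fun G : SimpleGraph (Fin k) => hasIsoComponent G F),
        ((-1 : ℚ)) ^ (Nat.card G.edgeSet)
        = ∑ G ∈ Finset.univ.filter (fun G : SimpleGraph (Fin k) => hasIsoComponent G F),
            ((-1 : ℚ)) ^ (ec G) :=
          Finset.sum_congr rfl (fun G _ => by rw [ec_eq_natCard])
      _ = ∑ G ∈ Finset.univ.filter (fun G : SimpleGraph (Fin k) => hasIsoComponent G F),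
            ∑ P ∈ (CG G).powerset.filter (fun P => P ≠ ∅),
              (-1:ℚ)^(ec G) * (-1:ℚ)^(P.card+1) := by
          refine Finset.sum_congr rfl (fun G hG => ?_)
          rw [← Finset.mul_sum, ← hone G
            ((hXiff G).mp (Finset.mem_filter.mp hG).2), mul_one]
      _ = ∑ G ∈ (Finset.univ : Finset (SimpleGraph (Fin k))),
            ∑ P ∈ (CG G).powerset.filter (fun P => P ≠ ∅),
              (-1:ℚ)^(ec G) * (-1:ℚ)^(P.card+1) := by
          apply Finset.sum_subset (Finset.filter_subset _ _)
          intro G _ hGX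
          rw [Finset.mem_filter, not_and] at hGX
          have : ¬ (CG G).Nonempty := fun h => hGX (Finset.mem_univ G) ((hXiff G).mpr h)
          have hCGe : CG G = ∅ := Finset.not_nonempty_iff_eq_empty.mp this
          rw [hCGe]
          rw [Finset.powerset_empty]
          rw [Finset.filter_singleton]
          simp
      _ = ∑ P ∈ (Finset.univ : Finset (Finset (Finset (Fin k)))),
            ∑ G ∈ Finset.univ.filter
              (fun G : SimpleGraph (Fin k) => P ≠ ∅ ∧ ∀ s ∈ P, IsComp F G s),
              (-1:ℚ)^(ec G) * (-1:ℚ)^(P.card+1) := by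
          apply Finset.sum_comm'
          intro G P
          simp only [Finset.mem_univ, true_and, and_true, Finset.mem_filter,
            Finset.mem_powerset]
          constructor
          · rintro ⟨hsub, hne⟩
            refine ⟨hne, fun s hs => ?_⟩
            have := hsub hs
            simp only [hCG, Finset.mem_filter, Finset.mem_univ, true_and] at this
            exact this
          · rintro ⟨hne, hall⟩
            refine ⟨fun s hs => ?_, hne⟩
            simp only [hCG, Finset.mem_filter, Finset.mem_univ, true_and]
            exact hall s hs
      _ = ∑ P ∈ (Finset.univ : Finset (Finset (Finset (Fin k)))),
            (if P ∈ famF f (Finset.univ : Finset (Fin k)) l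
              then (-1:ℚ)^(l+1) * cF f F ^ l else 0) :=
          Finset.sum_congr rfl (fun P _ => hT P)
      _ = ∑ P ∈ famF f (Finset.univ : Finset (Fin k)) l, ((-1:ℚ)^(l+1) * cF f F ^ l) := by
          rw [Finset.sum_ite_mem]
          congr 1
          simp
      _ = ((famF f (Finset.univ : Finset (Fin k)) l).card : ℚ)
            * ((-1:ℚ)^(l+1) * cF f F ^ l) := by
          rw [Finset.sum_const, nsmul_eq_mul]
  rw [main]
  -- final numeric computation
  set A : ℕ := (famF f (Finset.univ : Finset (Fin k)) l).card with hA
  set NF : ℕ := (Finset.univ.filter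
    (fun H : SimpleGraph (Fin f) => Nonempty (H ≃g F))).card with hNF
  set autF : ℕ := Nat.card (F ≃g F) with hautF
  have hNaut : NF * autF = f.factorial := card_iso_graphs F
  have haut0 : (autF : ℚ) ≠ 0 := by
    have := aut_card_pos F
    positivity
  have hlf : l * f ≤ k := by rw [hkla]; omega
  have hAfact : A * (f.factorial ^ l * l.factorial) = k.factorial := by
    have h := card_fam (by omega : 1 ≤ f) l (Finset.univ : Finset (Fin k))
      (by rw [Finset.card_univ, Fintype.card_fin]; exact hlf)
    rw [Finset.card_univ, Fintype.card_fin] at h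
    have hka : k - l * f = a := by rw [hkla]; omega
    rw [hka] at h
    have hafact : a.factorial = 1 := by interval_cases a <;> rfl
    rw [hafact, mul_one] at h
    exact h
  have hfac0 : ((f.factorial : ℚ) ^ l * (l.factorial : ℚ)) ≠ 0 := by positivity
  have hdiv1 : (k.factorial : ℚ) / ((f.factorial : ℚ) ^ l * (l.factorial : ℚ)) = (A : ℚ) := by
    rw [div_eq_iff hfac0]
    have := congrArg (fun n : ℕ => (n : ℚ)) hAfact
    push_cast at this
    linarith [this]
  have hdiv2 : (f.factorial : ℚ) / (autF : ℚ) = (NF : ℚ) := by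
    rw [div_eq_iff haut0]
    have := congrArg (fun n : ℕ => (n : ℚ)) hNaut
    push_cast at this
    linarith [this]
  rw [ec_eq_natCard F, hdiv1, hdiv2]
  simp only [cF]
  rw [← hNF]
  rw [mul_pow, ← pow_mul, Nat.mul_comm (ec F) l]
  push_cast
  ring
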